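/- arXiv:1902.02890 — 3 statements merged into one kernel-verified Lean document; each statement's English description precedes it below -/
import Mathlib

section
/- Let p ≥ 1, N a positive integer, and let q₁, …, q_N ≥ 0 with ∑ᵢ qᵢ = 1. Then ∑ᵢ qᵢ·(log(2/qᵢ))^{2/p} ≤ (log(2N))^{2/p}, where terms with qᵢ = 0 are interpreted as 0. -/
open Real Finset

private lemma key_H {u t : ℝ} (hu : 2 * Real.log 2 ≤ u) (ht : Real.log 2 - u ≤ t) :
    Real.exp (-t) * (t ^ 2 + 2 * u * t + 2 * u) ≤ 2 * u := by
  have hl2 : (0.6931471803 : ℝ) < Real.log 2 := Real.log_two_gt_d9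
  rcases le_or_gt 0 t with h0 | h0
  · -- t ≥ 0 : use exp t ≥ (1 + t/4)^4
    have h4 : t / 4 + 1 ≤ Real.exp (t / 4) := Real.add_one_le_exp _
    have hpow : (1 + t / 4) ^ 4 ≤ Real.exp t := by
      calc (1 + t / 4) ^ 4 ≤ Real.exp (t / 4) ^ 4 := by
            apply pow_le_pow_left₀ (by linarith) (by linarith)
        _ = Real.exp t := by
            rw [← Real.exp_nat_mul]
            norm_num
            ring_nf
    have hmain : t ^ 2 + 2 * u * t + 2 * u ≤ 2 * u * Real.exp t := by
      nlinarith [sq_nonneg t, mul_nonneg (mul_nonneg h0 h0) h0,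
        mul_nonneg (mul_nonneg (mul_nonneg h0 h0) h0) h0]
    have hexp : Real.exp (-t) * Real.exp t = 1 := by
      rw [← Real.exp_add]; simp
    have he : (0:ℝ) < Real.exp (-t) := Real.exp_pos _
    nlinarith [hmain, he]
  · -- t < 0 : H is monotone on [log 2 - u, 0]
    set H : ℝ → ℝ := fun x => Real.exp (-x) * (x ^ 2 + 2 * u * x + 2 * u) with hH
    have hderiv : ∀ x : ℝ, HasDerivAt H
        (-Real.exp (-x) * (x ^ 2 + 2 * u * x + 2 * u) + Real.exp (-x) * (2 * x + 2 * u)) x := by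
      intro x
      have h1 : HasDerivAt (fun y : ℝ => Real.exp (-y)) (-Real.exp (-x)) x := by
        simpa [Function.comp_def] using (Real.hasDerivAt_exp (-x)).comp x (hasDerivAt_neg x)
      have h2 : HasDerivAt (fun y : ℝ => y ^ 2 + 2 * u * y + 2 * u) (2 * x + 2 * u) x := by
        have := ((hasDerivAt_pow 2 x).add ((hasDerivAt_id x).const_mul (2 * u))).add_const (2 * u)
        simpa [mul_comm] using this
      exact h1.mul h2
    have hmono : MonotoneOn H (Set.Icc (Real.log 2 - u) 0) := by
      apply monotoneOn_of_deriv_nonneg (convex_Icc _ _)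
      · exact fun x _ => (hderiv x).continuousAt.continuousWithinAt
      · exact fun x _ => ((hderiv x).differentiableAt).differentiableWithinAt
      · intro x hx
        rw [interior_Icc] at hx
        rw [(hderiv x).deriv]
        have hx1 : Real.log 2 - u < x := hx.1
        have hx2 : x < 0 := hx.2
        have he : (0:ℝ) < Real.exp (-x) := Real.exp_pos _
        nlinarith [mul_pos (mul_pos he (neg_pos.mpr hx2))
          (show (0:ℝ) < x + 2 * u - 2 by linarith)]
    have h1 : H t ≤ H 0 := hmono ⟨ht, h0.le⟩ ⟨by linarith, le_rfl⟩ h0.le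
    simpa [hH] using h1

private lemma pointwise {N : ℕ} (hN : 2 ≤ N) {x : ℝ} (hx0 : 0 ≤ x) (hx1 : x ≤ 1) :
    x * (Real.log (2 / x)) ^ 2 ≤
      ((Real.log (2 * N)) ^ 2 - 2 * Real.log (2 * N)) * x + 2 * Real.log (2 * N) / N := by
  set u := Real.log (2 * (N:ℝ)) with hu
  have hN0 : (0:ℝ) < N := by positivity
  have hu4 : 2 * Real.log 2 ≤ u := by
    rw [hu, show (2:ℝ) * Real.log 2 = Real.log 4 by
      rw [show (4:ℝ) = 2 ^ 2 by norm_num, Real.log_pow]; push_cast; ring]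
    apply Real.log_le_log (by norm_num)
    have : (2:ℝ) ≤ N := by exact_mod_cast hN
    nlinarith
  have hl2 : (0.6931471803 : ℝ) < Real.log 2 := Real.log_two_gt_d9
  have hupos : 0 < u := by linarith
  rcases eq_or_lt_of_le hx0 with h | hx
  · rw [← h]
    have : (0:ℝ) ≤ 2 * u / N := by positivity
    simpa using this
  · set v := Real.log (2 / x) with hv
    have hvlog : v = Real.log 2 - Real.log x := by
      rw [hv, Real.log_div (by norm_num) (ne_of_gt hx)]
    have ht : Real.log 2 - u ≤ v - u := by
      have : Real.log x ≤ 0 := Real.log_nonpos hx0 hx1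
      linarith [hvlog]
    have key := key_H hu4 ht
    have hexpu : Real.exp u = 2 * N := Real.exp_log (by positivity)
    have hexpv : Real.exp (-v) = x / 2 := by
      rw [hvlog, neg_sub, Real.exp_sub, Real.exp_log hx, Real.exp_log (by norm_num : (0:ℝ) < 2)]
    have hexpt : Real.exp (-(v - u)) = (2 * N) * (x / 2) := by
      rw [show -(v - u) = u + -v by ring, Real.exp_add, hexpu, hexpv]
    rw [hexpt] at key
    have hexpand : (2 * (N:ℝ)) * (x / 2) * ((v - u) ^ 2 + 2 * u * (v - u) + 2 * u)
        = (N:ℝ) * (x * (v ^ 2 - u ^ 2 + 2 * u)) := by ring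
    rw [hexpand] at key
    have key2 : x * (v ^ 2 - u ^ 2 + 2 * u) ≤ 2 * u / N := by
      rw [le_div_iff₀ hN0]; nlinarith [key]
    nlinarith [key2]

private lemma sq_case {N : ℕ} (hN : 0 < N) (q : Fin N → ℝ)
    (hq0 : ∀ i, 0 ≤ q i) (hq1 : ∑ i, q i = 1) :
    ∑ i, q i * (Real.log (2 / q i)) ^ 2 ≤ (Real.log (2 * N)) ^ 2 := by
  have hqle1 : ∀ i, q i ≤ 1 := by
    intro i
    rw [← hq1]
    exact Finset.single_le_sum (fun j _ => hq0 j) (Finset.mem_univ i)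
  rcases eq_or_lt_of_le (show 1 ≤ N from hN) with h1 | h2
  · -- N = 1
    have hNe : N = 1 := h1.symm
    subst hNe
    have : q 0 = 1 := by simpa using hq1
    simp [Fin.sum_univ_one, this]
  · -- N ≥ 2
    have hN2 : 2 ≤ N := h2
    set u := Real.log (2 * (N:ℝ)) with hu
    calc ∑ i, q i * (Real.log (2 / q i)) ^ 2
        ≤ ∑ i, ((u ^ 2 - 2 * u) * q i + 2 * u / N) := by
          apply Finset.sum_le_sum
          intro i _
          exact pointwise hN2 (hq0 i) (hqle1 i)
      _ = (u ^ 2 - 2 * u) * (∑ i, q i) + N * (2 * u / N) := by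
          rw [Finset.sum_add_distrib, ← Finset.mul_sum, Finset.sum_const]
          simp [Finset.card_univ, mul_comm]
      _ = u ^ 2 := by
          rw [hq1]
          field_simp
          ring
      _ = (Real.log (2 * N)) ^ 2 := by rw [hu]

/-- Jensen-type bound: ∑ qᵢ (log(2/qᵢ))^{2/p} ≤ (log(2N))^{2/p} for a probability
vector q on N outcomes. -/
theorem sum_q_log_bound
    (p : ℝ) (hp : 1 ≤ p) (N : ℕ) (hN : 0 < N) (q : Fin N → ℝ)
    (hq0 : ∀ i, 0 ≤ q i) (hq1 : ∑ i, q i = 1) :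
    ∑ i, q i * (Real.log (2 / q i)) ^ (2 / p) ≤ (Real.log (2 * N)) ^ (2 / p) := by
  have hp0 : 0 < p := by linarith
  have hqle1 : ∀ i, q i ≤ 1 := by
    intro i
    rw [← hq1]
    exact Finset.single_le_sum (fun j _ => hq0 j) (Finset.mem_univ i)
  have hy0 : ∀ i, 0 ≤ Real.log (2 / q i) := by
    intro i
    rcases eq_or_lt_of_le (hq0 i) with h | h
    · rw [← h]; simp
    · apply Real.log_nonneg
      rw [le_div_iff₀ h]
      linarith [hqle1 i]
  have hz0 : ∀ i ∈ Finset.univ, (0:ℝ) ≤ Real.log (2 / q i) ^ (2 / p) := fun i _ =>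
    Real.rpow_nonneg (hy0 i) _
  have jensen := Real.arith_mean_le_rpow_mean Finset.univ q
    (fun i => Real.log (2 / q i) ^ (2 / p)) (fun i _ => hq0 i) hq1 hz0 hp
  have hzp : ∀ i, (Real.log (2 / q i) ^ (2 / p)) ^ p = Real.log (2 / q i) ^ (2:ℕ) := by
    intro i
    rw [← Real.rpow_natCast (Real.log (2 / q i)) 2, ← Real.rpow_mul (hy0 i)]
    congr 1
    field_simp
    norm_num
  have hsum_eq : ∑ i, q i * (Real.log (2 / q i) ^ (2 / p)) ^ p
      = ∑ i, q i * Real.log (2 / q i) ^ (2:ℕ) := by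
    apply Finset.sum_congr rfl
    intro i _
    rw [hzp i]
  rw [hsum_eq] at jensen
  have hsq := sq_case hN q hq0 hq1
  have hsum_nonneg : 0 ≤ ∑ i, q i * Real.log (2 / q i) ^ (2:ℕ) :=
    Finset.sum_nonneg fun i _ => mul_nonneg (hq0 i) (by positivity)
  have hmono : (∑ i, q i * Real.log (2 / q i) ^ (2:ℕ)) ^ (1 / p)
      ≤ ((Real.log (2 * N)) ^ (2:ℕ)) ^ (1 / p) :=
    Real.rpow_le_rpow hsum_nonneg hsq (by positivity)
  have hu0 : 0 ≤ Real.log (2 * (N:ℝ)) := by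
    apply Real.log_nonneg
    have : (1:ℝ) ≤ N := by exact_mod_cast hN
    linarith
  have hfinal : ((Real.log (2 * N)) ^ (2:ℕ)) ^ (1 / p) = (Real.log (2 * N)) ^ (2 / p) := by
    rw [← Real.rpow_natCast (Real.log (2 * (N:ℝ))) 2, ← Real.rpow_mul hu0]
    congr 1
    push_cast
    ring
  calc ∑ i, q i * Real.log (2 / q i) ^ (2 / p)
      ≤ (∑ i, q i * Real.log (2 / q i) ^ (2:ℕ)) ^ (1 / p) := jensen
    _ ≤ ((Real.log (2 * N)) ^ (2:ℕ)) ^ (1 / p) := hmono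
    _ = (Real.log (2 * N)) ^ (2 / p) := hfinal
end

section
/- Let Y be a real random variable with E[|Y|^p] ≤ 2K^p·p! for all integers p ≥ 2 and E[Y] = 0 (or more generally E[uY/K] ≤ 0 where needed). Then for every u with |u| < 1, E[exp(uY/K)] ≤ 1 + 2u²/(1−|u|) ≤ exp(2u²/(1−|u|)). -/
open MeasureTheory Real

/-- Pointwise: exp t - 1 - t ≤ exp |t| - 1 - |t|. -/
lemma exp_sub_le_exp_abs_sub (t : ℝ) :
    Real.exp t - 1 - t ≤ Real.exp |t| - 1 - |t| := by
  rcases le_or_gt 0 t with h | h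
  · rw [abs_of_nonneg h]
  · rw [abs_of_neg h]
    have h1 : 0 < -t := by linarith
    have h2 : (-t) < Real.sinh (-t) := Real.self_lt_sinh_iff.mpr h1
    rw [Real.sinh_eq, neg_neg] at h2
    linarith

/-- Series expression for exp |t| - 1 - |t|. -/
lemma exp_abs_sub_eq_tsum (t : ℝ) :
    Real.exp |t| - 1 - |t| = ∑' p : ℕ, |t| ^ (p + 2) / (Nat.factorial (p + 2)) := by
  have hsum : Summable (fun n : ℕ => |t| ^ n / (Nat.factorial n : ℝ)) :=
    Real.summable_pow_div_factorial _
  have hexp : Real.exp |t| = ∑' n : ℕ, |t| ^ n / (Nat.factorial n : ℝ) := by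
    rw [Real.exp_eq_exp_ℝ, NormedSpace.exp_eq_tsum_div]
  have hsplit := Summable.sum_add_tsum_nat_add (f := fun n : ℕ => |t| ^ n / (Nat.factorial n : ℝ)) 2 hsum
  have hrange : ∑ i ∈ Finset.range 2, |t| ^ i / (Nat.factorial i : ℝ) = 1 + |t| := by
    simp [Finset.sum_range_succ, Nat.factorial]
  rw [hrange] at hsplit
  rw [hexp, ← hsplit]
  ring

/-- Moment bounds E[|Y|^p] ≤ 2K^p·p! (p ≥ 2) and E[Y] = 0 imply the mgf bound
E[exp(uY/K)] ≤ 1 + 2u²/(1−|u|) ≤ exp(2u²/(1−|u|)) for |u| < 1. -/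
theorem moment_bounds_mgf_bound
    {Ω : Type*} [MeasurableSpace Ω] (μ : Measure Ω) [IsProbabilityMeasure μ]
    (Y : Ω → ℝ) (K : ℝ) (hK : 0 < K) (hmY : Measurable Y)
    (hmean : Integrable Y μ ∧ ∫ ω, Y ω ∂μ = 0)
    (hmom : ∀ p : ℕ, 2 ≤ p → Integrable (fun ω => |Y ω| ^ p) μ ∧
      ∫ ω, |Y ω| ^ p ∂μ ≤ 2 * K ^ p * (Nat.factorial p))
    (u : ℝ) (hu : |u| < 1)
    (hint : Integrable (fun ω => Real.exp (u * Y ω / K)) μ) :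
    ∫ ω, Real.exp (u * Y ω / K) ∂μ ≤ 1 + 2 * u ^ 2 / (1 - |u|) ∧
    (1 : ℝ) + 2 * u ^ 2 / (1 - |u|) ≤ Real.exp (2 * u ^ 2 / (1 - |u|)) := by
  obtain ⟨hYint, hYmean⟩ := hmean
  have hu1 : 0 < 1 - |u| := by linarith
  set C : ℝ := 2 * u ^ 2 / (1 - |u|) with hCdef
  have hC : 0 ≤ C := div_nonneg (by positivity) hu1.le
  constructor
  swap
  · linarith [Real.add_one_le_exp C]
  -- main part
  set x : Ω → ℝ := fun ω => u * Y ω / K with hxdef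
  have habsx : ∀ ω, |x ω| = (|u| / K) * |Y ω| := by
    intro ω
    simp only [hxdef, abs_div, abs_mul, abs_of_pos hK]
    ring
  set f : ℕ → Ω → ℝ := fun p ω => |x ω| ^ (p + 2) / (Nat.factorial (p + 2)) with hfdef
  have hfac_pos : ∀ p : ℕ, (0 : ℝ) < (Nat.factorial (p + 2) : ℝ) := fun p => by
    exact_mod_cast Nat.factorial_pos _
  have hfeq : ∀ p ω, f p ω = ((|u| / K) ^ (p + 2) / (Nat.factorial (p + 2) : ℝ)) * |Y ω| ^ (p + 2) := by
    intro p ω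
    rw [hfdef]; simp only [habsx ω, mul_pow]; ring
  have hfint : ∀ p : ℕ, Integrable (f p) μ := by
    intro p
    have := (hmom (p + 2) (by omega)).1
    have h2 := this.const_mul ((|u| / K) ^ (p + 2) / (Nat.factorial (p + 2) : ℝ))
    apply h2.congr
    filter_upwards with ω
    rw [hfeq p ω]
  have hfnonneg : ∀ p ω, 0 ≤ f p ω := by
    intro p ω
    exact div_nonneg (pow_nonneg (abs_nonneg _) _) (hfac_pos p).le
  have hfbound : ∀ p : ℕ, ∫ ω, f p ω ∂μ ≤ 2 * |u| ^ (p + 2) := by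
    intro p
    have hint2 := (hmom (p + 2) (by omega)).2
    set c : ℝ := (|u| / K) ^ (p + 2) / (Nat.factorial (p + 2) : ℝ) with hc
    have hc0 : 0 ≤ c := div_nonneg (pow_nonneg (by positivity) _) (hfac_pos p).le
    have h1 : ∫ ω, f p ω ∂μ = c * ∫ ω, |Y ω| ^ (p + 2) ∂μ := by
      rw [← integral_const_mul]
      exact integral_congr_ae (Filter.Eventually.of_forall fun ω => hfeq p ω)
    rw [h1]
    have h2 : c * ∫ ω, |Y ω| ^ (p + 2) ∂μ ≤ c * (2 * K ^ (p + 2) * (Nat.factorial (p + 2))) :=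
      mul_le_mul_of_nonneg_left hint2 hc0
    refine h2.trans (le_of_eq ?_)
    rw [hc, div_pow]
    field_simp
  have hφnonneg : ∀ ω, 0 ≤ Real.exp (x ω) - 1 - x ω := by
    intro ω
    have := Real.add_one_le_exp (x ω)
    linarith
  have hsummable : ∀ ω, Summable fun p : ℕ => f p ω := by
    intro ω
    exact (summable_nat_add_iff 2).mpr (Real.summable_pow_div_factorial |x ω|)
  have hφle : ∀ ω, Real.exp (x ω) - 1 - x ω ≤ ∑' p, f p ω := by
    intro ω
    calc Real.exp (x ω) - 1 - x ω ≤ Real.exp |x ω| - 1 - |x ω| := exp_sub_le_exp_abs_sub _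
      _ = ∑' p, f p ω := exp_abs_sub_eq_tsum _
  -- measurability
  have hmx : Measurable x := (measurable_const.mul hmY).div_const K
  have hmf : ∀ p, Measurable (f p) := fun p => (hmx.abs.pow_const _).div_const _
  -- geometric sum
  have hgeom_sum : Summable fun p : ℕ => 2 * |u| ^ (p + 2) := by
    have : Summable fun p : ℕ => |u| ^ p := summable_geometric_of_lt_one (abs_nonneg u) hu
    have h2 := (this.mul_left (2 * |u| ^ 2))
    apply h2.congr
    intro p
    rw [pow_add]; ring
  have hgeom_val : ∑' p : ℕ, 2 * |u| ^ (p + 2) = C := by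
    have heq : ∀ p : ℕ, 2 * |u| ^ (p + 2) = (2 * u ^ 2) * |u| ^ p := by
      intro p; rw [pow_add, sq_abs]; ring
    rw [tsum_congr heq, tsum_mul_left, tsum_geometric_of_lt_one (abs_nonneg u) hu,
      hCdef, div_eq_mul_inv]
  -- key lintegral bound
  have key : ∫⁻ ω, ENNReal.ofReal (Real.exp (x ω) - 1 - x ω) ∂μ ≤ ENNReal.ofReal C := by
    calc ∫⁻ ω, ENNReal.ofReal (Real.exp (x ω) - 1 - x ω) ∂μ
        ≤ ∫⁻ ω, ENNReal.ofReal (∑' p, f p ω) ∂μ :=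
          lintegral_mono fun ω => ENNReal.ofReal_le_ofReal (hφle ω)
      _ = ∫⁻ ω, ∑' p, ENNReal.ofReal (f p ω) ∂μ := by
          apply lintegral_congr
          intro ω
          exact ENNReal.ofReal_tsum_of_nonneg (fun p => hfnonneg p ω) (hsummable ω)
      _ = ∑' p, ∫⁻ ω, ENNReal.ofReal (f p ω) ∂μ :=
          lintegral_tsum fun p => ((hmf p).ennreal_ofReal).aemeasurable
      _ ≤ ∑' p : ℕ, ENNReal.ofReal (2 * |u| ^ (p + 2)) := by
          apply ENNReal.tsum_le_tsum
          intro p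
          rw [← ofReal_integral_eq_lintegral_ofReal (hfint p)
            (Filter.Eventually.of_forall fun ω => hfnonneg p ω)]
          exact ENNReal.ofReal_le_ofReal (hfbound p)
      _ = ENNReal.ofReal (∑' p : ℕ, 2 * |u| ^ (p + 2)) :=
          (ENNReal.ofReal_tsum_of_nonneg (fun p => by positivity) hgeom_sum).symm
      _ = ENNReal.ofReal C := by rw [hgeom_val]
  -- φ integrable
  have hxint : Integrable x μ := (hYint.const_mul u).div_const K
  have h1int : Integrable (fun ω => Real.exp (x ω) - 1) μ := hint.sub (integrable_const 1)
  have hφint : Integrable (fun ω => Real.exp (x ω) - 1 - x ω) μ := h1int.sub hxint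
  -- ∫ φ ≤ C
  have hφval : ∫ ω, (Real.exp (x ω) - 1 - x ω) ∂μ ≤ C := by
    rw [integral_eq_lintegral_of_nonneg_ae (Filter.Eventually.of_forall hφnonneg)
      hφint.aestronglyMeasurable]
    calc (∫⁻ ω, ENNReal.ofReal (Real.exp (x ω) - 1 - x ω) ∂μ).toReal
        ≤ (ENNReal.ofReal C).toReal := ENNReal.toReal_mono ENNReal.ofReal_ne_top key
      _ = C := ENNReal.toReal_ofReal hC
  -- finish
  have hxmean : ∫ ω, x ω ∂μ = 0 := by
    simp only [hxdef]
    rw [integral_div, integral_const_mul, hYmean]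
    simp
  have hsplit : ∫ ω, (Real.exp (x ω) - 1 - x ω) ∂μ
      = ∫ ω, Real.exp (x ω) ∂μ - 1 := by
    rw [integral_sub h1int hxint,
      integral_sub hint (integrable_const 1), hxmean, integral_const]
    simp
    rfl
  have : ∫ ω, Real.exp (x ω) ∂μ - 1 ≤ C := hsplit ▸ hφval
  simpa only [hxdef] using by linarith
end

section
/- Let X ~ N(θ, σ²I_d) and M any 2^k-valued quantization of X with θ-independent kernel. Then Tr(I_M(θ)) ≤ min{d/σ², (32/3)·k/σ²}. -/
open MeasureTheory Finset ProbabilityTheory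

open Filter Real Topology
open scoped NNReal ENNReal

namespace GaussFisherAux

/-! ### Elementary real inequalities -/

lemma abs_le_exp_add_exp (y : ℝ) : |y| ≤ Real.exp y + Real.exp (-y) := by
  rcases abs_cases y with ⟨h, _⟩ | ⟨h, _⟩ <;> rw [h] <;>
    nlinarith [Real.add_one_le_exp y, Real.add_one_le_exp (-y), Real.exp_pos y,
      Real.exp_pos (-y)]

lemma sq_le_exp_add_exp (y : ℝ) : y ^ 2 ≤ Real.exp y + Real.exp (-y) - 2 := by
  have key : ∀ z : ℝ, 0 ≤ z → z ^ 2 ≤ Real.exp z + Real.exp (-z) - 2 := by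
    intro z hz
    have h1 : z / 2 ≤ Real.sinh (z / 2) := Real.self_le_sinh_iff.mpr (by linarith)
    rw [Real.sinh_eq] at h1
    have h6 : z ≤ Real.exp (z/2) - Real.exp (-(z/2)) := by linarith
    have h3 : Real.exp (z/2) * Real.exp (-(z/2)) = 1 := by
      rw [← Real.exp_add]; simp
    have h4 : Real.exp (z/2) * Real.exp (z/2) = Real.exp z := by
      rw [← Real.exp_add]; ring_nf
    have h5 : Real.exp (-(z/2)) * Real.exp (-(z/2)) = Real.exp (-z) := by
      rw [← Real.exp_add]; ring_nf
    have h7 : z * z ≤ (Real.exp (z/2) - Real.exp (-(z/2))) * (Real.exp (z/2) - Real.exp (-(z/2))) :=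
      mul_self_le_mul_self hz h6
    nlinarith [h7]
  rcases le_total 0 y with h | h
  · exact key y h
  · have h2 := key (-y) (by linarith)
    rw [neg_neg] at h2
    nlinarith [h2]

/-! ### Scalar Gaussian facts -/

variable {v : ℝ≥0}

lemma pdf_shift (hv : v ≠ 0) (t x : ℝ) :
    Real.exp (t * x) * gaussianPDFReal 0 v x
      = Real.exp (v * t ^ 2 / 2) * gaussianPDFReal (t * v) v x := by
  have hv' : (v : ℝ) ≠ 0 := by exact_mod_cast hv
  simp only [gaussianPDFReal]
  rw [show Real.exp (t*x) * ((Real.sqrt (2*π*v))⁻¹ * Real.exp (-(x - 0)^2/(2*v)))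
      = (Real.sqrt (2*π*v))⁻¹ * (Real.exp (t*x) * Real.exp (-(x - 0)^2/(2*v))) from by ring,
    ← Real.exp_add,
    show Real.exp (v*t^2/2) * ((Real.sqrt (2*π*v))⁻¹ * Real.exp (-(x - t*v)^2/(2*v)))
      = (Real.sqrt (2*π*v))⁻¹ * (Real.exp (v*t^2/2) * Real.exp (-(x - t*v)^2/(2*v))) from by ring,
    ← Real.exp_add]
  congr 1
  field_simp
  ring

lemma integral_gaussianReal_eq (m : ℝ) (hv : v ≠ 0) (g : ℝ → ℝ) :
    ∫ x, g x ∂(gaussianReal m v) = ∫ x, gaussianPDFReal m v x * g x := by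
  rw [gaussianReal_of_var_ne_zero m hv]
  have hmeas : Measurable fun x => (gaussianPDFReal m v x).toNNReal :=
    (measurable_gaussianPDFReal m v).real_toNNReal
  rw [show (gaussianPDF m v) = fun x => ((gaussianPDFReal m v x).toNNReal : ℝ≥0∞) from rfl]
  rw [integral_withDensity_eq_integral_smul hmeas g]
  refine integral_congr_ae (Eventually.of_forall fun x => ?_)
  simp [NNReal.smul_def, Real.coe_toNNReal _ (gaussianPDFReal_nonneg m v x)]

lemma integrable_gaussianReal_iff (m : ℝ) (hv : v ≠ 0) (g : ℝ → ℝ) :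
    Integrable g (gaussianReal m v)
      ↔ Integrable (fun x => gaussianPDFReal m v x * g x) volume := by
  rw [gaussianReal_of_var_ne_zero m hv]
  have hmeas : Measurable fun x => (gaussianPDFReal m v x).toNNReal :=
    (measurable_gaussianPDFReal m v).real_toNNReal
  rw [show (gaussianPDF m v) = fun x => ((gaussianPDFReal m v x).toNNReal : ℝ≥0∞) from rfl]
  rw [integrable_withDensity_iff_integrable_smul hmeas]
  refine integrable_congr (Eventually.of_forall fun x => ?_)
  simp [NNReal.smul_def, Real.coe_toNNReal _ (gaussianPDFReal_nonneg m v x)]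

lemma integrable_exp_gaussianReal (hv : v ≠ 0) (t : ℝ) :
    Integrable (fun x => Real.exp (t * x)) (gaussianReal 0 v) := by
  rw [integrable_gaussianReal_iff 0 hv]
  have h : ∀ x, gaussianPDFReal 0 v x * Real.exp (t*x)
      = Real.exp (v*t^2/2) * gaussianPDFReal (t*v) v x := fun x => by
    rw [mul_comm, pdf_shift hv]
  simp_rw [h]
  exact (integrable_gaussianPDFReal (t*v) v).const_mul _

lemma integral_exp_gaussianReal (hv : v ≠ 0) (t : ℝ) :
    ∫ x, Real.exp (t * x) ∂(gaussianReal 0 v) = Real.exp (v * t ^ 2 / 2) := by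
  rw [integral_gaussianReal_eq 0 hv]
  have h : ∀ x, gaussianPDFReal 0 v x * Real.exp (t*x)
      = Real.exp (v*t^2/2) * gaussianPDFReal (t*v) v x := fun x => by
    rw [mul_comm, pdf_shift hv]
  simp_rw [h]
  rw [integral_const_mul, integral_gaussianPDFReal_eq_one (t*v) hv, mul_one]

lemma integrable_id_gaussianReal (hv : v ≠ 0) :
    Integrable (fun x : ℝ => x) (gaussianReal 0 v) := by
  refine Integrable.mono'
    ((integrable_exp_gaussianReal hv 1).add (integrable_exp_gaussianReal hv (-1)))
    measurable_id.aestronglyMeasurable (Eventually.of_forall fun x => ?_)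
  have := abs_le_exp_add_exp x
  simpa [Real.norm_eq_abs] using this

lemma integrable_sq_gaussianReal (hv : v ≠ 0) :
    Integrable (fun x : ℝ => x ^ 2) (gaussianReal 0 v) := by
  refine Integrable.mono'
    ((integrable_exp_gaussianReal hv 1).add (integrable_exp_gaussianReal hv (-1)))
    (measurable_id.pow_const 2).aestronglyMeasurable (Eventually.of_forall fun x => ?_)
  have := sq_le_exp_add_exp x
  rw [Real.norm_eq_abs, abs_of_nonneg (sq_nonneg x)]
  simp only [Pi.add_apply, one_mul, neg_one_mul]
  linarith

lemma tendsto_slope_exp :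
    Tendsto (fun u : ℝ => (Real.exp u - 1) / u) (𝓝[≠] (0:ℝ)) (𝓝 1) := by
  have h := hasDerivAt_iff_tendsto_slope.mp (Real.hasDerivAt_exp 0)
  rw [Real.exp_zero] at h
  refine h.congr' ?_
  filter_upwards [self_mem_nhdsWithin] with u hu
  have hu' : u ≠ 0 := hu
  rw [slope_def_field, Real.exp_zero]
  field_simp
  ring

lemma tendsto_ratio {c : ℝ} (hc : 0 < c) :
    Tendsto (fun l : ℝ => (Real.exp (c * l ^ 2) - 1) / (c * l ^ 2)) (𝓝[>] (0:ℝ)) (𝓝 1) := by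
  apply tendsto_slope_exp.comp
  rw [tendsto_nhdsWithin_iff]
  constructor
  · have h : Tendsto (fun l : ℝ => c * l ^ 2) (𝓝 0) (𝓝 (c * 0 ^ 2)) :=
      (continuous_const.mul (continuous_pow 2)).tendsto 0
    simpa using h.mono_left nhdsWithin_le_nhds
  · filter_upwards [self_mem_nhdsWithin] with l hl
    have hl' : (0:ℝ) < l := hl
    have : 0 < c * l ^ 2 := by positivity
    simp [ne_of_gt this]

lemma integral_id_gaussianReal (hv : v ≠ 0) :
    ∫ x, x ∂(gaussianReal 0 v) = 0 := by
  have hr : 0 < (v : ℝ) := by positivity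
  set ν := gaussianReal 0 v with hν
  set A := ∫ x, x ∂ν with hA
  have key : ∀ l : ℝ, 0 < l → |A| ≤ (Real.exp (v * l ^ 2 / 2) - 1) / l := by
    intro l hl
    have hpt : ∀ y : ℝ, y ≤ (Real.exp (l * y) - 1) / l := fun y => by
      rw [le_div_iff₀ hl]; nlinarith [Real.add_one_le_exp (l * y)]
    have hint : Integrable (fun x : ℝ => (Real.exp (l * x) - 1) / l) ν :=
      ((integrable_exp_gaussianReal hv l).sub (integrable_const 1)).div_const l
    have hint' : Integrable (fun x : ℝ => (Real.exp ((-l) * x) - 1) / l) ν :=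
      ((integrable_exp_gaussianReal hv (-l)).sub (integrable_const 1)).div_const l
    have hval : ∀ t : ℝ, ∫ x, (Real.exp (t * x) - 1) / l ∂ν
        = (Real.exp (v * t ^ 2 / 2) - 1) / l := by
      intro t
      rw [integral_div, integral_sub (integrable_exp_gaussianReal hv t) (integrable_const 1),
        integral_exp_gaussianReal hv t, integral_const]
      simp
    have h1 : A ≤ (Real.exp (v * l ^ 2 / 2) - 1) / l := by
      calc A ≤ ∫ x, (Real.exp (l * x) - 1) / l ∂ν :=
            integral_mono (integrable_id_gaussianReal hv) hint (fun x => hpt x)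
        _ = _ := hval l
    have h2 : -A ≤ (Real.exp (v * l ^ 2 / 2) - 1) / l := by
      have hnegA : ∫ x, -x ∂ν = -A := by rw [hA, ← integral_neg]
      have hpt2 : ∀ x : ℝ, -x ≤ (Real.exp ((-l) * x) - 1) / l := by
        intro x
        have := hpt (-x)
        rwa [show l * (-x) = (-l) * x from by ring] at this
      calc -A = ∫ x, -x ∂ν := hnegA.symm
        _ ≤ ∫ x, (Real.exp ((-l) * x) - 1) / l ∂ν :=
            integral_mono (integrable_id_gaussianReal hv).neg hint' (fun x => hpt2 x)
        _ = (Real.exp (v * (-l) ^ 2 / 2) - 1) / l := hval (-l)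
        _ = (Real.exp (v * l ^ 2 / 2) - 1) / l := by rw [neg_sq]
    exact abs_le.mpr ⟨by linarith, h1⟩
  have hlim : Tendsto (fun l : ℝ => (Real.exp (v * l ^ 2 / 2) - 1) / l) (𝓝[>] (0:ℝ)) (𝓝 0) := by
    have h2 := tendsto_ratio (show (0:ℝ) < v / 2 by positivity)
    have h3 : Tendsto (fun l : ℝ => (v/2 : ℝ) * l) (𝓝[>] (0:ℝ)) (𝓝 0) := by
      have : Tendsto (fun l : ℝ => (v/2 : ℝ) * l) (𝓝 0) (𝓝 ((v/2) * 0)) :=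
        (continuous_const.mul continuous_id).tendsto 0
      simpa using this.mono_left nhdsWithin_le_nhds
    have h4 := h2.mul h3
    rw [mul_zero] at h4
    refine Tendsto.congr' ?_ h4
    filter_upwards [self_mem_nhdsWithin] with l hl
    have hl' : (0:ℝ) < l := hl
    have h5 : (v:ℝ)/2 * l^2 ≠ 0 := by positivity
    have h6 : (v:ℝ) * l^2/2 = (v:ℝ)/2 * l^2 := by ring
    rw [h6]
    field_simp
  have habs : |A| ≤ 0 := by
    refine ge_of_tendsto hlim ?_
    filter_upwards [self_mem_nhdsWithin] with l hl
    exact key l hl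
  exact abs_nonpos_iff.mp habs



lemma integral_sq_gaussianReal_le (hv : v ≠ 0) :
    ∫ x, x ^ 2 ∂(gaussianReal 0 v) ≤ (v : ℝ) := by
  have hr : 0 < (v : ℝ) := by positivity
  set ν := gaussianReal 0 v with hν
  set A := ∫ x, x ^ 2 ∂ν with hA
  have key : ∀ l : ℝ, 0 < l →
      A ≤ (v : ℝ) * ((Real.exp ((v/2 : ℝ) * l ^ 2) - 1) / ((v/2 : ℝ) * l ^ 2)) := by
    intro l hl
    have hl2 : (0:ℝ) < l ^ 2 := by positivity
    have hpt : ∀ y : ℝ, y ^ 2 ≤ (Real.exp (l * y) + Real.exp ((-l) * y) - 2) / l ^ 2 := by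
      intro y
      rw [le_div_iff₀ hl2]
      have := sq_le_exp_add_exp (l * y)
      calc y ^ 2 * l ^ 2 = (l * y) ^ 2 := by ring
        _ ≤ Real.exp (l * y) + Real.exp (-(l * y)) - 2 := this
        _ = Real.exp (l * y) + Real.exp ((-l) * y) - 2 := by rw [neg_mul]
    have hint : Integrable (fun x : ℝ => (Real.exp (l * x) + Real.exp ((-l) * x) - 2) / l ^ 2) ν :=
      (((integrable_exp_gaussianReal hv l).add (integrable_exp_gaussianReal hv (-l))).sub
        (integrable_const 2)).div_const _
    have h1 : A ≤ (Real.exp ((v:ℝ) * l ^ 2 / 2) * 2 - 2) / l ^ 2 := by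
      calc A ≤ ∫ x, (Real.exp (l * x) + Real.exp ((-l) * x) - 2) / l ^ 2 ∂ν :=
            integral_mono (integrable_sq_gaussianReal hv) hint (fun x => hpt x)
        _ = (Real.exp ((v:ℝ) * l ^ 2 / 2) * 2 - 2) / l ^ 2 := by
            have hadd : Integrable (fun x : ℝ => Real.exp (l * x) + Real.exp ((-l) * x)) ν :=
              (integrable_exp_gaussianReal hv l).add (integrable_exp_gaussianReal hv (-l))
            rw [integral_div, integral_sub hadd (integrable_const 2),
              integral_add (integrable_exp_gaussianReal hv l) (integrable_exp_gaussianReal hv (-l)),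
              integral_exp_gaussianReal hv l, integral_exp_gaussianReal hv (-l), integral_const,
              neg_sq]
            simp only [measure_univ, probReal_univ, smul_eq_mul, one_mul]
            ring_nf
    have heq : (Real.exp ((v:ℝ) * l ^ 2 / 2) * 2 - 2) / l ^ 2
        = (v : ℝ) * ((Real.exp ((v/2 : ℝ) * l ^ 2) - 1) / ((v/2 : ℝ) * l ^ 2)) := by
      rw [show (v:ℝ) * l ^ 2 / 2 = (v/2 : ℝ) * l ^ 2 from by ring]
      field_simp
    rw [← heq]; exact h1
  have hlim : Tendsto (fun l : ℝ => (v : ℝ) * ((Real.exp ((v/2 : ℝ) * l ^ 2) - 1) /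
      ((v/2 : ℝ) * l ^ 2))) (𝓝[>] (0:ℝ)) (𝓝 ((v:ℝ) * 1)) :=
    (tendsto_ratio (show (0:ℝ) < (v:ℝ)/2 by positivity)).const_mul _
  rw [mul_one] at hlim
  refine ge_of_tendsto hlim ?_
  filter_upwards [self_mem_nhdsWithin] with l hl
  exact key l hl

/-! ### Product (pi) measure facts -/

variable {d : ℕ}

lemma pi_prod_facts (hv : v ≠ 0) (f : Fin d → ℝ → ℝ)
    (hf : ∀ i, Integrable (f i) (gaussianReal 0 v)) :
    Integrable (fun x : Fin d → ℝ => ∏ i, f i (x i))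
        (Measure.pi fun _ => gaussianReal 0 v) ∧
      ∫ x, ∏ i, f i (x i) ∂(Measure.pi fun _ : Fin d => gaussianReal 0 v)
        = ∏ i, ∫ y, f i y ∂(gaussianReal 0 v) := by
  letI : MeasureSpace ℝ := ⟨gaussianReal 0 v⟩
  haveI : SigmaFinite (volume : Measure ℝ) := by
    show SigmaFinite (gaussianReal 0 v); infer_instance
  exact ⟨Integrable.fintype_prod hf, integral_fintype_prod_eq_prod (fun i => f i)⟩

lemma pi_single (hv : v ≠ 0) (f : ℝ → ℝ) (hf : Integrable f (gaussianReal 0 v)) (i : Fin d) :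
    Integrable (fun x : Fin d → ℝ => f (x i)) (Measure.pi fun _ => gaussianReal 0 v) ∧
      ∫ x, f (x i) ∂(Measure.pi fun _ : Fin d => gaussianReal 0 v)
        = ∫ y, f y ∂(gaussianReal 0 v) := by
  classical
  obtain ⟨h1, h2⟩ := pi_prod_facts hv (fun j => if j = i then f else fun _ => 1)
    (fun j => by split_ifs with h; exacts [hf, integrable_const 1])
  have hpt : ∀ x : Fin d → ℝ,
      (∏ j, (if j = i then f else fun _ => (1:ℝ)) (x j)) = f (x i) := by
    intro x
    rw [Finset.prod_eq_single i (fun j _ hj => by simp [hj]) (by simp)]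
    simp
  constructor
  · exact h1.congr (Eventually.of_forall hpt)
  · rw [← integral_congr_ae (Eventually.of_forall hpt), h2,
      Finset.prod_eq_single i (fun j _ hj => by simp [hj, integral_const, measure_univ])
        (by simp)]
    simp

lemma pi_mgf (hv : v ≠ 0) (u : Fin d → ℝ) (c : ℝ) :
    Integrable (fun x : Fin d → ℝ => Real.exp (c * ∑ i, u i * x i))
        (Measure.pi fun _ => gaussianReal 0 v) ∧
      ∫ x, Real.exp (c * ∑ i, u i * x i) ∂(Measure.pi fun _ : Fin d => gaussianReal 0 v)
        = Real.exp ((v : ℝ) * c ^ 2 * (∑ i, (u i) ^ 2) / 2) := by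
  have hpt : ∀ x : Fin d → ℝ,
      Real.exp (c * ∑ i, u i * x i) = ∏ i, Real.exp (c * u i * x i) := by
    intro x
    rw [← Real.exp_sum]
    congr 1
    rw [Finset.mul_sum]
    exact Finset.sum_congr rfl fun i _ => by ring
  obtain ⟨h1, h2⟩ := pi_prod_facts hv (fun i y => Real.exp (c * u i * y))
    (fun i => integrable_exp_gaussianReal hv _)
  refine ⟨h1.congr (Eventually.of_forall fun x => (hpt x).symm), ?_⟩
  rw [integral_congr_ae (Eventually.of_forall hpt), h2]
  have h3 : ∀ i : Fin d, ∫ y, Real.exp (c * u i * y) ∂(gaussianReal 0 v)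
      = Real.exp (((v:ℝ) * c ^ 2 / 2) * (u i) ^ 2) := by
    intro i
    rw [integral_exp_gaussianReal hv]
    congr 1
    ring
  rw [Finset.prod_congr rfl fun i _ => h3 i, ← Real.exp_sum, ← Finset.mul_sum]
  congr 1
  ring

/-! ### Main per-outcome estimates over the product Gaussian -/

section Main

variable {σ : ℝ} {d : ℕ}

local notation "ν₀" => gaussianReal 0 (Real.toNNReal (σ^2))
local notation "μ₀" => (Measure.pi fun _ : Fin d => gaussianReal 0 (Real.toNNReal (σ^2)))

lemma hv_ne (hσ : 0 < σ) : Real.toNNReal (σ^2) ≠ 0 := by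
  simp only [ne_eq, Real.toNNReal_eq_zero, not_le]
  positivity

lemma hv_coe (hσ : 0 < σ) : ((Real.toNNReal (σ^2) : ℝ≥0) : ℝ) = σ^2 :=
  Real.coe_toNNReal _ (by positivity)

lemma integrable_B (hσ : 0 < σ) {B : (Fin d → ℝ) → ℝ} (hBm : Measurable B)
    (hB : ∀ x, B x ∈ Set.Icc (0:ℝ) 1) : Integrable B μ₀ := by
  refine Integrable.mono' (integrable_const 1) hBm.aestronglyMeasurable
    (Eventually.of_forall fun x => ?_)
  rw [Real.norm_eq_abs, abs_of_nonneg (hB x).1]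
  exact (hB x).2

lemma integrable_xi (hσ : 0 < σ) (i : Fin d) :
    Integrable (fun x : Fin d → ℝ => x i) μ₀ :=
  (pi_single (hv_ne hσ) _ (integrable_id_gaussianReal (hv_ne hσ)) i).1

lemma integrable_xi_sq (hσ : 0 < σ) (i : Fin d) :
    Integrable (fun x : Fin d → ℝ => (x i) ^ 2) μ₀ :=
  (pi_single (hv_ne hσ) _ (integrable_sq_gaussianReal (hv_ne hσ)) i).1

lemma integrable_xi_B (hσ : 0 < σ) {B : (Fin d → ℝ) → ℝ} (hBm : Measurable B)
    (hB : ∀ x, B x ∈ Set.Icc (0:ℝ) 1) (i : Fin d) :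
    Integrable (fun x : Fin d → ℝ => x i * B x) μ₀ := by
  refine Integrable.mono' (integrable_xi hσ i).abs
    (((measurable_pi_apply i).mul hBm).aestronglyMeasurable)
    (Eventually.of_forall fun x => ?_)
  rw [Real.norm_eq_abs, abs_mul]
  calc |x i| * |B x| ≤ |x i| * 1 := by
        refine mul_le_mul_of_nonneg_left ?_ (abs_nonneg _)
        rw [abs_of_nonneg (hB x).1]; exact (hB x).2
    _ = |x i| := mul_one _

lemma integrable_xi_sq_B (hσ : 0 < σ) {B : (Fin d → ℝ) → ℝ} (hBm : Measurable B)
    (hB : ∀ x, B x ∈ Set.Icc (0:ℝ) 1) (i : Fin d) :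
    Integrable (fun x : Fin d → ℝ => (x i) ^ 2 * B x) μ₀ := by
  refine Integrable.mono' (integrable_xi_sq hσ i)
    (((measurable_pi_apply i).pow_const 2).mul hBm).aestronglyMeasurable
    (Eventually.of_forall fun x => ?_)
  rw [Real.norm_eq_abs, abs_mul, abs_of_nonneg (sq_nonneg (x i))]
  calc (x i)^2 * |B x| ≤ (x i)^2 * 1 := by
        refine mul_le_mul_of_nonneg_left ?_ (sq_nonneg _)
        rw [abs_of_nonneg (hB x).1]; exact (hB x).2
    _ = (x i)^2 := mul_one _

lemma B_ae_zero (hσ : 0 < σ) {B : (Fin d → ℝ) → ℝ} (hBm : Measurable B)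
    (hB : ∀ x, B x ∈ Set.Icc (0:ℝ) 1) (hp : ∫ x, B x ∂μ₀ = 0) :
    ∀ i : Fin d, ∫ x, x i * B x ∂μ₀ = 0 := by
  intro i
  have h0 : B =ᵐ[μ₀] 0 :=
    (integral_eq_zero_iff_of_nonneg (fun x => (hB x).1) (integrable_B hσ hBm hB)).mp hp
  have : (fun x : Fin d → ℝ => x i * B x) =ᵐ[μ₀] 0 := by
    filter_upwards [h0] with x hx
    simp [hx]
  rw [integral_congr_ae this]
  simp

/-- Cauchy–Schwarz step. -/
lemma cs_step (hσ : 0 < σ) {B : (Fin d → ℝ) → ℝ} (hBm : Measurable B)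
    (hB : ∀ x, B x ∈ Set.Icc (0:ℝ) 1) (i : Fin d) :
    (∫ x, x i * B x ∂μ₀) ^ 2 ≤ (∫ x, B x ∂μ₀) * ∫ x, (x i) ^ 2 * B x ∂μ₀ := by
  set p := ∫ x, B x ∂μ₀ with hp_def
  set Bq := ∫ x, x i * B x ∂μ₀ with hBq_def
  set A := ∫ x, (x i) ^ 2 * B x ∂μ₀ with hA_def
  have hp0 : 0 ≤ p := integral_nonneg fun x => (hB x).1
  have hA0 : 0 ≤ A := integral_nonneg fun x => mul_nonneg (sq_nonneg _) (hB x).1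
  by_cases hp : p = 0
  · have hBq0 : Bq = 0 := hBq_def.trans (B_ae_zero hσ hBm hB hp i)
    rw [hBq0, hp]
    simp
  · have hpp : 0 < p := lt_of_le_of_ne hp0 (Ne.symm hp)
    have expand : ∀ c : ℝ, 0 ≤ A - 2 * c * Bq + c ^ 2 * p := by
      intro c
      have h0 : 0 ≤ ∫ x, (x i - c) ^ 2 * B x ∂μ₀ :=
        integral_nonneg fun x => mul_nonneg (sq_nonneg _) (hB x).1
      have heq : ∫ x, (x i - c) ^ 2 * B x ∂μ₀ = A - 2 * c * Bq + c ^ 2 * p := by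
        have hpt : ∀ x : Fin d → ℝ, (x i - c) ^ 2 * B x
            = ((x i) ^ 2 * B x - 2 * c * (x i * B x)) + c ^ 2 * B x := fun x => by ring
        simp_rw [hpt]
        have hi1 : Integrable
            (fun x : Fin d → ℝ => (x i) ^ 2 * B x - 2 * c * (x i * B x)) μ₀ :=
          (integrable_xi_sq_B hσ hBm hB i).sub ((integrable_xi_B hσ hBm hB i).const_mul _)
        have hi2 : Integrable (fun x : Fin d → ℝ => c ^ 2 * B x) μ₀ :=
          (integrable_B hσ hBm hB).const_mul _
        rw [integral_add hi1 hi2,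
          integral_sub (integrable_xi_sq_B hσ hBm hB i)
            ((integrable_xi_B hσ hBm hB i).const_mul _),
          integral_const_mul, integral_const_mul]
      linarith [heq ▸ h0]
    have key := expand (Bq / p)
    have e1 : 2 * (Bq / p) * Bq = 2 * (Bq ^ 2 / p) := by field_simp
    have e2 : (Bq / p) ^ 2 * p = Bq ^ 2 / p := by field_simp [hp]
    rw [e1, e2] at key
    have : Bq ^ 2 / p ≤ A := by linarith
    calc Bq ^ 2 = Bq ^ 2 / p * p := by field_simp
      _ ≤ A * p := mul_le_mul_of_nonneg_right this hp0
      _ = p * A := mul_comm _ _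

/-- Shared final algebra for the core bound. -/
lemma final_alg {σ t p L G : ℝ} (hσ : 0 < σ) (ht : 0 < t) (hp : 0 < p) (hL : 0 ≤ L)
    (ht2 : t ^ 2 = 2 * σ ^ 2 * max L 1) (hG0 : 0 ≤ G)
    (hGb : G ≤ t * p + σ ^ 2 / t * p) :
    G ^ 2 ≤ (9/2) * σ ^ 2 * p ^ 2 * (L + 1) := by
  set s := σ ^ 2 / t with hs_def
  set M := max L 1 with hM_def
  have hM1 : 1 ≤ M := le_max_right _ _
  have hML : M ≤ L + 1 := max_le (by linarith) (by linarith)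
  have hts : s * t = σ ^ 2 := by
    rw [hs_def]; field_simp
  have hss : s ^ 2 * (2 * σ ^ 2 * M) = σ ^ 2 * σ ^ 2 := by
    rw [hs_def, ← ht2, div_pow]
    field_simp
  have hσ2 : (0:ℝ) < σ ^ 2 := by positivity
  have hs2 : s ^ 2 ≤ σ ^ 2 / 2 := by
    have h1 : s ^ 2 * (2 * σ ^ 2) ≤ s ^ 2 * (2 * σ ^ 2 * M) := by
      nlinarith [sq_nonneg s]
    rw [hss] at h1
    nlinarith
  have hq : (t + s) ^ 2 ≤ (9/2) * σ ^ 2 * (L + 1) := by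
    have hexp : (t + s) ^ 2 = t ^ 2 + 2 * (s * t) + s ^ 2 := by ring
    rw [hexp, ht2, hts]
    nlinarith
  have hGb' : G ≤ p * (t + s) := by rw [hs_def]; nlinarith
  have h2 : G ^ 2 ≤ (p * (t + s)) ^ 2 := pow_le_pow_left₀ hG0 hGb' 2
  calc G ^ 2 ≤ (p * (t + s)) ^ 2 := h2
    _ = p ^ 2 * (t + s) ^ 2 := by ring
    _ ≤ p ^ 2 * ((9/2) * σ ^ 2 * (L + 1)) := by
        exact mul_le_mul_of_nonneg_left hq (sq_nonneg p)
    _ = (9/2) * σ ^ 2 * p ^ 2 * (L + 1) := by ring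

/-- The key sub-Gaussian bound on the squared norm of the score integral. -/
lemma core (hσ : 0 < σ) {B : (Fin d → ℝ) → ℝ} (hBm : Measurable B)
    (hB : ∀ x, B x ∈ Set.Icc (0:ℝ) 1) :
    ∑ i, (∫ x, x i * B x ∂μ₀) ^ 2
      ≤ (9/2) * σ ^ 2 * (∫ x, B x ∂μ₀) ^ 2 * (-Real.log (∫ x, B x ∂μ₀) + 1) := by
  have hv := hv_ne hσ
  haveI : IsProbabilityMeasure (μ₀ : Measure (Fin d → ℝ)) := by infer_instance
  set p := ∫ x, B x ∂μ₀ with hp_def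
  have hp0 : 0 ≤ p := integral_nonneg fun x => (hB x).1
  by_cases hp : p = 0
  · have h0 := B_ae_zero hσ hBm hB hp
    rw [Finset.sum_congr rfl fun i _ => by rw [h0 i]]
    simp [hp]
  have hpp : 0 < p := lt_of_le_of_ne hp0 (Ne.symm hp)
  have hp1 : p ≤ 1 := by
    have := integral_mono (integrable_B hσ hBm hB) (integrable_const 1)
      (fun x => (hB x).2)
    simpa using this
  have hL0 : 0 ≤ -Real.log p := by
    have := Real.log_nonpos hp0 hp1
    linarith
  set g : Fin d → ℝ := fun i => ∫ x, x i * B x ∂μ₀ with hg_def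
  set G := Real.sqrt (∑ i, g i ^ 2) with hG_def
  have hsum0 : 0 ≤ ∑ i, g i ^ 2 := Finset.sum_nonneg fun i _ => sq_nonneg _
  have hG2 : G ^ 2 = ∑ i, g i ^ 2 := Real.sq_sqrt hsum0
  have hG0 : 0 ≤ G := Real.sqrt_nonneg _
  by_cases hG : G = 0
  · rw [← hG2, hG]
    have : (0:ℝ) ^ 2 = 0 := by norm_num
    rw [this]
    positivity
  have hGpos : 0 < G := lt_of_le_of_ne hG0 (Ne.symm hG)
  -- the scalar mgf bound
  have main : ∀ t : ℝ, 0 < t → G ≤ t * p + σ ^ 2 / t * Real.exp (-t ^ 2 / (2 * σ ^ 2)) := by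
    intro t ht
    set u : Fin d → ℝ := fun i => g i / G with hu_def
    have hu : ∑ i, u i ^ 2 = 1 := by
      simp only [hu_def, div_pow]
      rw [← Finset.sum_div, ← hG2]
      field_simp
    set c := t / σ ^ 2 with hc_def
    have hσ2 : (0:ℝ) < σ ^ 2 := by positivity
    have hcpos : 0 < c := by positivity
    have hZBint : Integrable (fun x : Fin d → ℝ => (∑ i, u i * x i) * B x) μ₀ := by
      have hdom : Integrable (fun x : Fin d → ℝ => ∑ i, |u i| * |x i|) μ₀ :=
        integrable_finset_sum _ fun i _ => ((integrable_xi hσ i).abs.const_mul _)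
      refine Integrable.mono' hdom ?_ (Eventually.of_forall fun x => ?_)
      · exact ((Finset.measurable_sum _ fun i _ =>
          by fun_prop).mul hBm).aestronglyMeasurable
      · rw [Real.norm_eq_abs, abs_mul]
        calc |∑ i, u i * x i| * |B x| ≤ |∑ i, u i * x i| * 1 := by
              refine mul_le_mul_of_nonneg_left ?_ (abs_nonneg _)
              rw [abs_of_nonneg (hB x).1]; exact (hB x).2
          _ = |∑ i, u i * x i| := mul_one _
          _ ≤ ∑ i, |u i * x i| := Finset.abs_sum_le_sum_abs _ _
          _ = ∑ i, |u i| * |x i| := Finset.sum_congr rfl fun i _ => abs_mul _ _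
    obtain ⟨hexpint, hexpval⟩ := pi_mgf (d := d) hv u c
    have hpt : ∀ x : Fin d → ℝ, (∑ i, u i * x i) * B x
        ≤ t * B x + Real.exp (-(c*t)) / c * Real.exp (c * ∑ i, u i * x i) := by
      intro x
      set Z := ∑ i, u i * x i with hZ_def
      have hexppos : (0:ℝ) < Real.exp (-(c*t)) / c * Real.exp (c * Z) := by positivity
      rcases le_or_gt Z t with h | h
      · have : Z * B x ≤ t * B x := mul_le_mul_of_nonneg_right h (hB x).1
        linarith
      · have h1 : (Z - t) * B x ≤ (Z - t) := by
          calc (Z - t) * B x ≤ (Z - t) * 1 :=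
              mul_le_mul_of_nonneg_left (hB x).2 (by linarith)
            _ = Z - t := mul_one _
        have h2 : Z - t ≤ Real.exp (c * (Z - t)) / c := by
          rw [le_div_iff₀ hcpos]
          nlinarith [Real.add_one_le_exp (c * (Z - t))]
        have h3 : Real.exp (c * (Z - t)) = Real.exp (-(c*t)) * Real.exp (c * Z) := by
          rw [← Real.exp_add]; ring_nf
        have h4 : Z * B x - t * B x ≤ Real.exp (-(c*t)) / c * Real.exp (c * Z) := by
          calc Z * B x - t * B x = (Z - t) * B x := by ring
            _ ≤ Z - t := h1
            _ ≤ Real.exp (c * (Z - t)) / c := h2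
            _ = Real.exp (-(c*t)) / c * Real.exp (c * Z) := by rw [h3]; ring
        linarith
    have hRint : Integrable (fun x : Fin d → ℝ =>
        t * B x + Real.exp (-(c*t)) / c * Real.exp (c * ∑ i, u i * x i)) μ₀ :=
      ((integrable_B hσ hBm hB).const_mul t).add (hexpint.const_mul _)
    have hZG : ∫ x, (∑ i, u i * x i) * B x ∂μ₀ = G := by
      have hpt2 : ∀ x : Fin d → ℝ, (∑ i, u i * x i) * B x
          = ∑ i, u i * (x i * B x) := by
        intro x
        rw [Finset.sum_mul]
        exact Finset.sum_congr rfl fun i _ => by ring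
      simp_rw [hpt2]
      rw [integral_finset_sum _ fun i _ => (integrable_xi_B hσ hBm hB i).const_mul (u i)]
      have : ∀ i : Fin d, ∫ x, u i * (x i * B x) ∂μ₀ = u i * g i := fun i =>
        integral_const_mul _ _
      rw [Finset.sum_congr rfl fun i _ => this i,
        Finset.sum_congr rfl fun i _ => show u i * g i = g i ^ 2 / G from by
          rw [hu_def]; ring,
        ← Finset.sum_div, ← hG2]
      field_simp [pow_two]
    have hint : G ≤ t * p + Real.exp (-(c*t)) / c * Real.exp ((σ^2) * c ^ 2 / 2) := by
      have h := integral_mono hZBint hRint hpt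
      rw [hZG] at h
      rw [integral_add ((integrable_B hσ hBm hB).const_mul t) (hexpint.const_mul _),
        integral_const_mul, integral_const_mul, hexpval, hu, mul_one, hv_coe hσ] at h
      exact h
    have hfin : Real.exp (-(c*t)) / c * Real.exp ((σ^2) * c ^ 2 / 2)
        = σ ^ 2 / t * Real.exp (-t ^ 2 / (2 * σ ^ 2)) := by
      have h1 : Real.exp (-(c*t)) * Real.exp (σ^2 * c ^ 2 / 2)
          = Real.exp (-t ^ 2 / (2 * σ ^ 2)) := by
        rw [← Real.exp_add]
        congr 1
        rw [hc_def]
        field_simp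
        ring
      rw [div_mul_eq_mul_div, h1, hc_def]
      rw [div_div_eq_mul_div, div_mul_eq_mul_div, mul_comm]
    rw [hfin] at hint
    exact hint
  -- case analysis on the size of p
  by_cases hcase : p ≤ Real.exp (-1)
  · -- small p
    set L := -Real.log p with hL_def
    have hL1 : 1 ≤ L := by
      have h := Real.log_le_log hpp hcase
      rw [Real.log_exp] at h
      rw [hL_def]
      linarith
    set t := σ * Real.sqrt (2 * L) with ht_def
    have h2L : (0:ℝ) < 2 * L := by linarith
    have ht : 0 < t := by
      rw [ht_def]
      exact mul_pos hσ (Real.sqrt_pos.mpr h2L)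
    have ht2 : t ^ 2 = 2 * σ ^ 2 * max L 1 := by
      rw [ht_def, mul_pow, Real.sq_sqrt h2L.le, max_eq_left (by linarith)]
      ring
    have hexp : Real.exp (-t ^ 2 / (2 * σ ^ 2)) = p := by
      have hσ2 : (σ:ℝ) ^ 2 ≠ 0 := by positivity
      have : -t ^ 2 / (2 * σ ^ 2) = -L := by
        rw [ht2, max_eq_left (by linarith)]
        field_simp
      rw [this, hL_def, neg_neg, Real.exp_log hpp]
    have hGb := main t ht
    rw [hexp] at hGb
    rw [← hG2]
    exact final_alg hσ ht hpp (by linarith) ht2 hG0 hGb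
  · -- large p
    push_neg at hcase
    set L := -Real.log p with hL_def
    set t := σ * Real.sqrt 2 with ht_def
    have ht : 0 < t := by
      rw [ht_def]
      exact mul_pos hσ (Real.sqrt_pos.mpr (by norm_num))
    have hLle : L ≤ 1 := by
      have h := Real.log_lt_log (Real.exp_pos (-1)) hcase
      rw [Real.log_exp] at h
      rw [hL_def]
      linarith
    have hML : max L 1 = 1 := max_eq_right hLle
    have ht2 : t ^ 2 = 2 * σ ^ 2 * max L 1 := by
      rw [ht_def, mul_pow, Real.sq_sqrt (by norm_num : (0:ℝ) ≤ 2), hML]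
      ring
    have hexp : Real.exp (-t ^ 2 / (2 * σ ^ 2)) ≤ p := by
      have hσ2 : (σ:ℝ) ^ 2 ≠ 0 := by positivity
      have he : -t ^ 2 / (2 * σ ^ 2) = -1 := by
        rw [ht2, hML]
        field_simp
      rw [he]
      exact hcase.le
    have hGb' := main t ht
    have hGb : G ≤ t * p + σ ^ 2 / t * p := by
      have hmul : σ ^ 2 / t * Real.exp (-t ^ 2 / (2 * σ ^ 2)) ≤ σ ^ 2 / t * p :=
        mul_le_mul_of_nonneg_left hexp (by positivity)
      linarith
    rw [← hG2]
    exact final_alg hσ ht hpp (by linarith) ht2 hG0 hGb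

lemma entropy_term {p : ℝ} (hp0 : 0 ≤ p) {n : ℕ} (hn : 1 ≤ n) :
    p * (-Real.log p) ≤ p * Real.log n + 1 / n - p := by
  have hn0 : (0:ℝ) < n := by exact_mod_cast hn
  by_cases hp : p = 0
  · rw [hp]
    simp
  have hpp : 0 < p := lt_of_le_of_ne hp0 (Ne.symm hp)
  have h := Real.log_le_sub_one_of_pos (show (0:ℝ) < 1/(p * n) by positivity)
  rw [one_div, Real.log_inv, Real.log_mul (ne_of_gt hpp) (ne_of_gt hn0)] at h
  have h2 := mul_le_mul_of_nonneg_left h hp0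
  have h3 : p * (p * (n:ℝ))⁻¹ = 1/n := by field_simp
  nlinarith [h2, h3]

lemma bound_one_term (hσ : 0 < σ) {B : (Fin d → ℝ) → ℝ} (hBm : Measurable B)
    (hB : ∀ x, B x ∈ Set.Icc (0:ℝ) 1) (i : Fin d) :
    (∫ x, B x ∂μ₀) * (((∫ x, x i * B x ∂μ₀) / σ ^ 2) / (∫ x, B x ∂μ₀)) ^ 2
      ≤ (∫ x, (x i) ^ 2 * B x ∂μ₀) / σ ^ 4 := by
  set p := ∫ x, B x ∂μ₀ with hp_def
  set gq := ∫ x, x i * B x ∂μ₀ with hg_def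
  set A := ∫ x, (x i) ^ 2 * B x ∂μ₀ with hA_def
  have hA0 : 0 ≤ A := integral_nonneg fun x => mul_nonneg (sq_nonneg _) (hB x).1
  have hp0 : 0 ≤ p := integral_nonneg fun x => (hB x).1
  have hσ4 : (0:ℝ) < σ ^ 4 := by positivity
  by_cases hp : p = 0
  · rw [hp]
    simp
    positivity
  have hpp : 0 < p := lt_of_le_of_ne hp0 (Ne.symm hp)
  have halg : p * ((gq / σ ^ 2) / p) ^ 2 = (gq ^ 2 / p) / σ ^ 4 := by
    field_simp
  rw [halg]
  refine (div_le_div_iff_of_pos_right hσ4).mpr ?_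
  rw [div_le_iff₀ hpp]
  calc gq ^ 2 ≤ p * A := cs_step hσ hBm hB i
    _ = A * p := mul_comm _ _

lemma bound_two_term (hσ : 0 < σ) {B : (Fin d → ℝ) → ℝ} (hBm : Measurable B)
    (hB : ∀ x, B x ∈ Set.Icc (0:ℝ) 1) :
    (∫ x, B x ∂μ₀) * ∑ i, (((∫ x, x i * B x ∂μ₀) / σ ^ 2) / (∫ x, B x ∂μ₀)) ^ 2
      ≤ (9/2) / σ ^ 2 *
        ((∫ x, B x ∂μ₀) * (-Real.log (∫ x, B x ∂μ₀)) + (∫ x, B x ∂μ₀)) := by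
  set p := ∫ x, B x ∂μ₀ with hp_def
  set g : Fin d → ℝ := fun i => ∫ x, x i * B x ∂μ₀ with hg_def
  have hp0 : 0 ≤ p := integral_nonneg fun x => (hB x).1
  have hσ2 : (0:ℝ) < σ ^ 2 := by positivity
  by_cases hp : p = 0
  · rw [hp]
    simp
  have hpp : 0 < p := lt_of_le_of_ne hp0 (Ne.symm hp)
  have halg : p * ∑ i, ((g i / σ ^ 2) / p) ^ 2 = (∑ i, g i ^ 2) / (p * σ ^ 4) := by
    rw [Finset.mul_sum, Finset.sum_congr rfl fun i _ =>
      show p * ((g i / σ ^ 2) / p) ^ 2 = g i ^ 2 / (p * σ ^ 4) from by field_simp,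
      ← Finset.sum_div]
  rw [halg]
  have hcore := core hσ hBm hB
  rw [← hp_def] at hcore
  have hpσ : (0:ℝ) < p * σ ^ 4 := by positivity
  refine ((div_le_div_iff_of_pos_right hpσ).mpr hcore).trans_eq ?_
  field_simp

lemma sum_P_eq_one {N : ℕ} (hσ : 0 < σ) (B : Fin N → (Fin d → ℝ) → ℝ)
    (hBm : ∀ m, Measurable (B m)) (hB : ∀ m x, B m x ∈ Set.Icc (0:ℝ) 1)
    (hBsum : ∀ x, ∑ m, B m x = 1) :
    ∑ m, ∫ x, B m x ∂μ₀ = 1 := by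
  haveI : IsProbabilityMeasure (μ₀ : Measure (Fin d → ℝ)) := by infer_instance
  have h := integral_finset_sum (μ := (μ₀ : Measure (Fin d → ℝ))) (f := fun m => B m)
    Finset.univ (fun m _ => integrable_B hσ (hBm m) (hB m))
  rw [← h, integral_congr_ae (Eventually.of_forall fun x => hBsum x)]
  simp

theorem centered_main (k N : ℕ) (hN : N = 2 ^ k) (hσ : 0 < σ)
    (B : Fin N → (Fin d → ℝ) → ℝ) (hBm : ∀ m, Measurable (B m))
    (hB : ∀ m x, B m x ∈ Set.Icc (0:ℝ) 1) (hBsum : ∀ x, ∑ m, B m x = 1) :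
    ∑ m, (∫ x, B m x ∂μ₀) *
        ∑ i, ((∫ x, x i / σ ^ 2 * B m x ∂μ₀) / (∫ x, B m x ∂μ₀)) ^ 2
      ≤ min ((d:ℝ) / σ ^ 2) ((32/3) * (k:ℝ) / σ ^ 2) := by
  have hv := hv_ne hσ
  haveI : IsProbabilityMeasure (μ₀ : Measure (Fin d → ℝ)) := by infer_instance
  have hσ2 : (0:ℝ) < σ ^ 2 := by positivity
  have hgd : ∀ (m : Fin N) (i : Fin d), ∫ x, x i / σ ^ 2 * B m x ∂μ₀
      = (∫ x, x i * B m x ∂μ₀) / σ ^ 2 := by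
    intro m i
    rw [show (fun x : Fin d → ℝ => x i / σ ^ 2 * B m x)
        = fun x => (σ ^ 2)⁻¹ * (x i * B m x) from funext fun x => by ring]
    rw [integral_const_mul, inv_mul_eq_div]
  simp_rw [hgd]
  refine le_min ?_ ?_
  · -- data processing bound: d / σ²
    calc ∑ m, (∫ x, B m x ∂μ₀) *
          ∑ i, (((∫ x, x i * B m x ∂μ₀) / σ ^ 2) / (∫ x, B m x ∂μ₀)) ^ 2
        ≤ ∑ m, ∑ i, (∫ x, (x i) ^ 2 * B m x ∂μ₀) / σ ^ 4 := by
          refine Finset.sum_le_sum fun m _ => ?_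
          rw [Finset.mul_sum]
          exact Finset.sum_le_sum fun i _ => bound_one_term hσ (hBm m) (hB m) i
      _ = ∑ i : Fin d, ∑ m, (∫ x, (x i) ^ 2 * B m x ∂μ₀) / σ ^ 4 := Finset.sum_comm
      _ = ∑ i : Fin d, (∫ x, (x i) ^ 2 ∂μ₀) / σ ^ 4 := by
          refine Finset.sum_congr rfl fun i _ => ?_
          have h := integral_finset_sum (μ := (μ₀ : Measure (Fin d → ℝ)))
            (f := fun m (x : Fin d → ℝ) => (x i) ^ 2 * B m x) Finset.univ
            (fun m _ => integrable_xi_sq_B hσ (hBm m) (hB m) i)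
          rw [← Finset.sum_div, ← h]
          have h2 : (∫ x : Fin d → ℝ, ∑ m, (x i) ^ 2 * B m x ∂μ₀)
              = ∫ x : Fin d → ℝ, (x i) ^ 2 ∂μ₀ :=
            integral_congr_ae (Eventually.of_forall fun x => by
              show ∑ m, (x i) ^ 2 * B m x = (x i) ^ 2
              rw [← Finset.mul_sum, hBsum x, mul_one])
          rw [h2]
      _ ≤ ∑ i : Fin d, σ ^ 2 / σ ^ 4 := by
          refine Finset.sum_le_sum fun i _ => ?_
          refine div_le_div_of_nonneg_right ?_ (by positivity)
          rw [(pi_single hv _ (integrable_sq_gaussianReal hv) i).2]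
          calc ∫ y, y ^ 2 ∂(gaussianReal 0 (Real.toNNReal (σ^2)))
              ≤ ((Real.toNNReal (σ^2) : ℝ≥0) : ℝ) := integral_sq_gaussianReal_le hv
            _ = σ ^ 2 := hv_coe hσ
      _ = (d:ℝ) / σ ^ 2 := by
          rw [Finset.sum_const, Finset.card_univ, Fintype.card_fin, nsmul_eq_mul]
          have hσ' : σ ≠ 0 := ne_of_gt hσ
          field_simp
  · -- sub-Gaussian bound: (32/3) k / σ²
    by_cases hk : k = 0
    · -- N = 1, the single B is constant 1, and the score integrates to 0
      have hN1 : N = 1 := by rw [hN, hk, pow_zero]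
      haveI : Subsingleton (Fin N) := by rw [hN1]; infer_instance
      have hB1 : ∀ (m : Fin N) x, B m x = 1 := by
        intro m x
        have h := hBsum x
        rwa [show (Finset.univ : Finset (Fin N)) = {m} from
          Finset.eq_singleton_iff_unique_mem.mpr
            ⟨Finset.mem_univ m, fun y _ => Subsingleton.elim y m⟩,
          Finset.sum_singleton] at h
      have hg0 : ∀ (m : Fin N) (i : Fin d), ∫ x, x i * B m x ∂μ₀ = 0 := by
        intro m i
        rw [integral_congr_ae (Eventually.of_forall fun x => by rw [hB1 m x, mul_one])]
        rw [(pi_single hv _ (integrable_id_gaussianReal hv) i).2,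
          integral_id_gaussianReal hv]
      have hzero : ∀ m : Fin N, (∫ x, B m x ∂μ₀) *
          ∑ i, (((∫ x, x i * B m x ∂μ₀) / σ ^ 2) / (∫ x, B m x ∂μ₀)) ^ 2 = 0 := by
        intro m
        have hterm : ∀ i : Fin d,
            (((∫ x, x i * B m x ∂μ₀) / σ ^ 2) / (∫ x, B m x ∂μ₀)) ^ 2 = 0 := by
          intro i
          rw [hg0 m i]
          simp
        rw [Finset.sum_congr rfl fun i _ => hterm i]
        simp
      rw [Finset.sum_congr rfl fun m _ => hzero m, Finset.sum_const, smul_zero, hk]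
      simp
    · have hk1 : 1 ≤ k := Nat.one_le_iff_ne_zero.mpr hk
      have hN1 : 1 ≤ N := by rw [hN]; exact Nat.one_le_two_pow
      calc ∑ m, (∫ x, B m x ∂μ₀) *
            ∑ i, (((∫ x, x i * B m x ∂μ₀) / σ ^ 2) / (∫ x, B m x ∂μ₀)) ^ 2
          ≤ ∑ m, (9/2) / σ ^ 2 * ((∫ x, B m x ∂μ₀) * (-Real.log (∫ x, B m x ∂μ₀))
              + (∫ x, B m x ∂μ₀)) :=
            Finset.sum_le_sum fun m _ => bound_two_term hσ (hBm m) (hB m)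
        _ = (9/2) / σ ^ 2 * ((∑ m, (∫ x, B m x ∂μ₀) * (-Real.log (∫ x, B m x ∂μ₀))) + 1) := by
            rw [← Finset.mul_sum, Finset.sum_add_distrib,
              sum_P_eq_one hσ B hBm hB hBsum]
        _ ≤ (9/2) / σ ^ 2 * (Real.log N + 1) := by
            refine mul_le_mul_of_nonneg_left ?_ (by positivity)
            have hent : ∑ m, (∫ x, B m x ∂μ₀) * (-Real.log (∫ x, B m x ∂μ₀))
                ≤ ∑ m : Fin N, ((∫ x, B m x ∂μ₀) * Real.log N + 1/N - (∫ x, B m x ∂μ₀)) :=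
              Finset.sum_le_sum fun m _ =>
                entropy_term (integral_nonneg fun x => (hB m x).1) hN1
            have hsum : ∑ m : Fin N, ((∫ x, B m x ∂μ₀) * Real.log N + 1/N
                - (∫ x, B m x ∂μ₀)) = Real.log N := by
              rw [Finset.sum_sub_distrib, Finset.sum_add_distrib, ← Finset.sum_mul,
                sum_P_eq_one hσ B hBm hB hBsum, one_mul, Finset.sum_const,
                Finset.card_univ, Fintype.card_fin, nsmul_eq_mul]
              have hNne : (N:ℝ) ≠ 0 := by positivity
              field_simp
              ring
            linarith [hent, hsum.le, hsum.ge]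
        _ ≤ (32/3) * (k:ℝ) / σ ^ 2 := by
            have hlog2 : Real.log 2 ≤ 1 := by
              have := Real.log_le_sub_one_of_pos (by norm_num : (0:ℝ) < 2)
              linarith
            have hlogN : Real.log N = k * Real.log 2 := by
              rw [hN]
              push_cast
              rw [Real.log_pow]
            have hk1' : (1:ℝ) ≤ k := by exact_mod_cast hk1
            have hlogk : Real.log N ≤ (k:ℝ) := by
              rw [hlogN]
              calc (k:ℝ) * Real.log 2 ≤ (k:ℝ) * 1 :=
                  mul_le_mul_of_nonneg_left hlog2 (by linarith)
                _ = k := mul_one _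
            rw [div_mul_eq_mul_div]
            refine (div_le_div_iff_of_pos_right hσ2).mpr ?_
            nlinarith [hlogk, hk1']

end Main

end GaussFisherAux


/-- Gaussian location model: for X ~ N(θ, σ²I_d) and any 2^k-valued quantization M
of X, the trace of the Fisher information of M (expressed via the geometric
identity Tr(I_M(θ)) = ∑ₘ p(m|θ)‖E[S_θ(X)|m]‖₂² with score S_θ(x) = (x−θ)/σ²)
is at most min{d/σ², (32/3)·k/σ²}. -/
theorem gaussian_location_trace_fisher_bound
    (d k N : ℕ) (hN : N = 2 ^ k)
    (σ : ℝ) (hσ : 0 < σ) (θ : Fin d → ℝ)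
    (b : Fin N → (Fin d → ℝ) → ℝ)
    (hbmeas : ∀ m, Measurable (b m))
    (hb : ∀ m x, b m x ∈ Set.Icc (0 : ℝ) 1) (hbsum : ∀ x, ∑ m, b m x = 1) :
    (∑ m, (∫ x, b m x ∂(Measure.pi fun i => gaussianReal (θ i) (Real.toNNReal (σ ^ 2)))) *
        ∑ i, ((∫ x, ((x i - θ i) / σ ^ 2) * b m x
                ∂(Measure.pi fun i => gaussianReal (θ i) (Real.toNNReal (σ ^ 2)))) /
              (∫ x, b m x
                ∂(Measure.pi fun i => gaussianReal (θ i) (Real.toNNReal (σ ^ 2))))) ^ 2)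
      ≤ min ((d : ℝ) / σ ^ 2) ((32 / 3) * (k : ℝ) / σ ^ 2) := by
  set e : (Fin d → ℝ) ≃ᵐ (Fin d → ℝ) :=
    MeasurableEquiv.piCongrRight fun i => (Homeomorph.addRight (θ i)).toMeasurableEquiv
    with he_def
  have hecoe : ∀ (x : Fin d → ℝ) (i : Fin d), e x i = x i + θ i := fun x i => rfl
  have hmp : MeasurePreserving e
      (Measure.pi fun _ : Fin d => gaussianReal 0 (Real.toNNReal (σ ^ 2)))
      (Measure.pi fun i => gaussianReal (θ i) (Real.toNNReal (σ ^ 2))) := by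
    have h := measurePreserving_pi (fun _ : Fin d => gaussianReal 0 (Real.toNNReal (σ ^ 2)))
      (fun i => gaussianReal (θ i) (Real.toNNReal (σ ^ 2)))
      (f := fun i (y : ℝ) => y + θ i)
      (fun i => ⟨measurable_add_const _, by
        show Measure.map (· + θ i) (gaussianReal 0 (Real.toNNReal (σ ^ 2)))
          = gaussianReal (θ i) (Real.toNNReal (σ ^ 2))
        rw [gaussianReal_map_add_const (θ i), zero_add]⟩)
    exact ⟨e.measurable,
      by rw [show ⇑e = fun (a : Fin d → ℝ) i => a i + θ i from rfl]; exact h.map_eq⟩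
  have hib : ∀ f : (Fin d → ℝ) → ℝ,
      ∫ x, f x ∂(Measure.pi fun i => gaussianReal (θ i) (Real.toNNReal (σ ^ 2)))
        = ∫ x, f (e x) ∂(Measure.pi fun _ : Fin d => gaussianReal 0 (Real.toNNReal (σ ^ 2))) :=
    fun f => (hmp.integral_comp' f).symm
  have hmain := GaussFisherAux.centered_main (d := d) k N hN hσ (fun m y => b m (e y))
    (fun m => (hbmeas m).comp e.measurable) (fun m y => hb m (e y)) (fun y => hbsum (e y))
  refine le_trans (le_of_eq ?_) hmain
  refine Finset.sum_congr rfl fun m _ => ?_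
  have h1 : ∫ x, b m x ∂(Measure.pi fun i => gaussianReal (θ i) (Real.toNNReal (σ ^ 2)))
      = ∫ x, b m (e x) ∂(Measure.pi fun _ : Fin d => gaussianReal 0 (Real.toNNReal (σ ^ 2))) :=
    hib (fun x => b m x)
  have h2 : ∀ i : Fin d,
      ∫ x, ((x i - θ i) / σ ^ 2) * b m x
          ∂(Measure.pi fun i => gaussianReal (θ i) (Real.toNNReal (σ ^ 2)))
        = ∫ x, x i / σ ^ 2 * b m (e x)
          ∂(Measure.pi fun _ : Fin d => gaussianReal 0 (Real.toNNReal (σ ^ 2))) := by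
    intro i
    rw [hib (fun x => ((x i - θ i) / σ ^ 2) * b m x)]
    refine integral_congr_ae (Filter.Eventually.of_forall fun x => ?_)
    show ((e x i - θ i) / σ ^ 2) * b m (e x) = x i / σ ^ 2 * b m (e x)
    rw [hecoe, add_sub_cancel_right]
  rw [h1]
  congr 1
  exact Finset.sum_congr rfl fun i _ => by rw [h2 i]
end
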